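/- Assume the rate coefficients satisfy the growth condition (GB) with constants C, Q and weights q_{i,k}. Let c_0 = (c_{0i}) ∈ X_{0,1}^+ and T ∈ (0,∞). Then for each i ∈ ℕ there exists a constant Γ_{2,i}(T) > 0, independent of N, such that for every integer N ≥ max(i,2) the nonnegative solution c^N of the N-truncated isolated DGED system with initial data c_j^N(0) = c_{0j} (0 ≤ j ≤ N) satisfies ∫_0^T |d c_i^N/dt (t)| dt ≤ Γ_{2,i}(T). -/

import Mathlib

open Finset

/-- Truncated operator `Q^N_{1,i}`. -/
noncomputable def QN1 (a : ℕ → ℕ → ℕ → ℝ) (N : ℕ) (c : ℕ → ℝ) (i : ℕ) : ℝ :=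
  ∑ k ∈ Finset.Icc 1 (N - i), ∑ j ∈ Finset.Icc 0 (N - k), a (i + k) j k * c (i + k) * c j

/-- Truncated operator `Q^N_{2,i}`. -/
noncomputable def QN2 (a : ℕ → ℕ → ℕ → ℝ) (N : ℕ) (c : ℕ → ℝ) (i : ℕ) : ℝ :=
  -∑ k ∈ Finset.Icc 1 (N - i), ∑ j ∈ Finset.Icc k N, a j i k * c j * c i

/-- Truncated operator `Q^N_{3,i}`. -/
noncomputable def QN3 (a : ℕ → ℕ → ℕ → ℝ) (N : ℕ) (c : ℕ → ℝ) (i : ℕ) : ℝ :=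
  ∑ k ∈ Finset.Icc 1 i, ∑ j ∈ Finset.Icc k N, a j (i - k) k * c j * c (i - k)

/-- Truncated operator `Q^N_{4,i}`. -/
noncomputable def QN4 (a : ℕ → ℕ → ℕ → ℝ) (N : ℕ) (c : ℕ → ℝ) (i : ℕ) : ℝ :=
  -∑ k ∈ Finset.Icc 1 i, ∑ j ∈ Finset.Icc 0 (N - k), a i j k * c j * c i

/-- `c` is a solution of the `N`-truncated isolated DGED system on the set `I`. -/
def IsTruncSolIso (a : ℕ → ℕ → ℕ → ℝ) (N : ℕ) (I : Set ℝ) (c : ℕ → ℝ → ℝ) : Prop :=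
  ∀ t ∈ I,
    HasDerivAt (c 0) (QN1 a N (fun n => c n t) 0 + QN2 a N (fun n => c n t) 0) t ∧
    (∀ i, 1 ≤ i → i ≤ N - 1 →
      HasDerivAt (c i)
        (QN1 a N (fun n => c n t) i + QN2 a N (fun n => c n t) i +
          QN3 a N (fun n => c n t) i + QN4 a N (fun n => c n t) i) t) ∧
    HasDerivAt (c N) (QN3 a N (fun n => c n t) N + QN4 a N (fun n => c n t) N) t


/-- Growth condition (GB) on the rate coefficients. -/
def GB (a : ℕ → ℕ → ℕ → ℝ) (C Q : ℝ) (q : ℕ → ℕ → ℝ) : Prop :=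
  1 ≤ C ∧ 1 ≤ Q ∧ (∀ i k, 0 ≤ q i k) ∧
  (∀ i : ℕ, 1 ≤ i →
    ∑ k ∈ Finset.Icc 1 i, (k : ℝ) * ((i : ℝ) - k + 1) * q i k ≤ Q * i) ∧
  (∀ i j k : ℕ, 1 ≤ k → k ≤ i → 1 ≤ j →
    a i j k ≤ C * ((i : ℝ) - k + 1) * ((j : ℝ) + k) * q i k)

/-! ### Auxiliary material -/

/-- The canonical index set of elementary reactions. -/
def dS (N : ℕ) : Finset (ℕ × ℕ × ℕ) :=
  ((Finset.range (N+1)) ×ˢ (Finset.range (N+1)) ×ˢ (Finset.range (N+1))).filter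
    (fun x => 1 ≤ x.2.1 ∧ x.2.1 ≤ x.1 ∧ x.2.2 + x.2.1 ≤ N)

lemma mem_dS {N : ℕ} (x : ℕ × ℕ × ℕ) :
    x ∈ dS N ↔ (x.1 ≤ N ∧ 1 ≤ x.2.1 ∧ x.2.1 ≤ x.1 ∧ x.2.2 + x.2.1 ≤ N) := by
  simp only [dS, Finset.mem_filter, Finset.mem_product, Finset.mem_range, Nat.lt_succ_iff]
  omega

lemma reindexQ1 (a : ℕ → ℕ → ℕ → ℝ) (N : ℕ) (d : ℕ → ℝ) :
    ∑ i ∈ Finset.range (N+1), (1 + (i:ℝ)) * QN1 a N d i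
      = ∑ x ∈ dS N, (1 + (x.1:ℝ) - x.2.1) * (a x.1 x.2.2 x.2.1 * d x.1 * d x.2.2) := by
  unfold QN1
  simp only [Finset.mul_sum]
  have h1 : ∑ x ∈ (Finset.range (N+1)).sigma
          (fun i => (Finset.Icc 1 (N-i)).sigma (fun k => Finset.Icc 0 (N-k))),
          (1 + (x.1:ℝ)) * (a (x.1 + x.2.1) x.2.2 x.2.1 * d (x.1 + x.2.1) * d x.2.2)
      = ∑ i ∈ Finset.range (N+1), ∑ k ∈ Finset.Icc 1 (N-i), ∑ j ∈ Finset.Icc 0 (N-k),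
      (1 + (i:ℝ)) * (a (i + k) j k * d (i + k) * d j) := by
    rw [Finset.sum_sigma]
    exact Finset.sum_congr rfl (fun i _ => by rw [Finset.sum_sigma])
  rw [← h1]
  refine Finset.sum_nbij' (fun x => (x.1 + x.2.1, x.2.1, x.2.2))
    (fun y => ⟨y.1 - y.2.1, y.2.1, y.2.2⟩) ?_ ?_ ?_ ?_ ?_
  · intro x hx
    simp only [Finset.mem_sigma, Finset.mem_range, Finset.mem_Icc, Nat.lt_succ_iff] at hx
    rw [mem_dS]; dsimp only; omega
  · intro y hy
    rw [mem_dS] at hy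
    simp only [Finset.mem_sigma, Finset.mem_range, Finset.mem_Icc, Nat.lt_succ_iff]
    omega
  · intro x hx
    simp only [Finset.mem_sigma, Finset.mem_range, Finset.mem_Icc, Nat.lt_succ_iff] at hx
    dsimp only
    congr 1
    omega
  · intro y hy
    rw [mem_dS] at hy
    dsimp only
    ext <;> dsimp only <;> omega
  · intro x hx
    simp only [Finset.mem_sigma, Finset.mem_range, Finset.mem_Icc, Nat.lt_succ_iff] at hx
    dsimp only
    have : ((x.1 + x.2.1 : ℕ) : ℝ) = (x.1 : ℝ) + x.2.1 := by push_cast; ring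
    rw [this]; ring

lemma reindexQ2 (a : ℕ → ℕ → ℕ → ℝ) (N : ℕ) (d : ℕ → ℝ) :
    ∑ i ∈ Finset.range (N+1), (1 + (i:ℝ)) * QN2 a N d i
      = -∑ x ∈ dS N, (1 + (x.2.2:ℝ)) * (a x.1 x.2.2 x.2.1 * d x.1 * d x.2.2) := by
  unfold QN2
  simp only [mul_neg, Finset.mul_sum, Finset.sum_neg_distrib]
  rw [neg_inj]
  have h1 : ∑ x ∈ (Finset.range (N+1)).sigma
          (fun i => (Finset.Icc 1 (N-i)).sigma (fun k => Finset.Icc k N)),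
          (1 + (x.1:ℝ)) * (a x.2.2 x.1 x.2.1 * d x.2.2 * d x.1)
      = ∑ i ∈ Finset.range (N+1), ∑ k ∈ Finset.Icc 1 (N-i), ∑ j ∈ Finset.Icc k N,
      (1 + (i:ℝ)) * (a j i k * d j * d i) := by
    rw [Finset.sum_sigma]
    exact Finset.sum_congr rfl (fun i _ => by rw [Finset.sum_sigma])
  rw [← h1]
  refine Finset.sum_nbij' (fun x => (x.2.2, x.2.1, x.1))
    (fun y => ⟨y.2.2, y.2.1, y.1⟩) ?_ ?_ ?_ ?_ ?_
  · intro x hx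
    simp only [Finset.mem_sigma, Finset.mem_range, Finset.mem_Icc, Nat.lt_succ_iff] at hx
    rw [mem_dS]; dsimp only; omega
  · intro y hy
    rw [mem_dS] at hy
    simp only [Finset.mem_sigma, Finset.mem_range, Finset.mem_Icc, Nat.lt_succ_iff]
    omega
  · intro x hx
    rfl
  · intro y hy
    rfl
  · intro x hx
    dsimp only

lemma reindexQ3 (a : ℕ → ℕ → ℕ → ℝ) (N : ℕ) (d : ℕ → ℝ) :
    ∑ i ∈ Finset.range (N+1), (1 + (i:ℝ)) * QN3 a N d i
      = ∑ x ∈ dS N, (1 + (x.2.2:ℝ) + x.2.1) * (a x.1 x.2.2 x.2.1 * d x.1 * d x.2.2) := by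
  unfold QN3
  simp only [Finset.mul_sum]
  have h1 : ∑ x ∈ (Finset.range (N+1)).sigma
          (fun i => (Finset.Icc 1 i).sigma (fun k => Finset.Icc k N)),
          (1 + (x.1:ℝ)) * (a x.2.2 (x.1 - x.2.1) x.2.1 * d x.2.2 * d (x.1 - x.2.1))
      = ∑ i ∈ Finset.range (N+1), ∑ k ∈ Finset.Icc 1 i, ∑ j ∈ Finset.Icc k N,
      (1 + (i:ℝ)) * (a j (i - k) k * d j * d (i - k)) := by
    rw [Finset.sum_sigma]
    exact Finset.sum_congr rfl (fun i _ => by rw [Finset.sum_sigma])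
  rw [← h1]
  refine Finset.sum_nbij' (fun x => (x.2.2, x.2.1, x.1 - x.2.1))
    (fun y => ⟨y.2.2 + y.2.1, y.2.1, y.1⟩) ?_ ?_ ?_ ?_ ?_
  · intro x hx
    simp only [Finset.mem_sigma, Finset.mem_range, Finset.mem_Icc, Nat.lt_succ_iff] at hx
    rw [mem_dS]; dsimp only; omega
  · intro y hy
    rw [mem_dS] at hy
    simp only [Finset.mem_sigma, Finset.mem_range, Finset.mem_Icc, Nat.lt_succ_iff]
    omega
  · intro x hx
    simp only [Finset.mem_sigma, Finset.mem_range, Finset.mem_Icc, Nat.lt_succ_iff] at hx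
    dsimp only
    congr 1
    omega
  · intro y hy
    rw [mem_dS] at hy
    dsimp only
    ext <;> dsimp only <;> omega
  · intro x hx
    simp only [Finset.mem_sigma, Finset.mem_range, Finset.mem_Icc, Nat.lt_succ_iff] at hx
    dsimp only
    have : ((x.1 - x.2.1 : ℕ) : ℝ) = (x.1 : ℝ) - x.2.1 := by
      have := hx.2.1.2
      push_cast [Nat.cast_sub this]
      ring
    rw [this]; ring

lemma reindexQ4 (a : ℕ → ℕ → ℕ → ℝ) (N : ℕ) (d : ℕ → ℝ) :
    ∑ i ∈ Finset.range (N+1), (1 + (i:ℝ)) * QN4 a N d i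
      = -∑ x ∈ dS N, (1 + (x.1:ℝ)) * (a x.1 x.2.2 x.2.1 * d x.1 * d x.2.2) := by
  unfold QN4
  simp only [mul_neg, Finset.mul_sum, Finset.sum_neg_distrib]
  rw [neg_inj]
  have h1 : ∑ x ∈ (Finset.range (N+1)).sigma
          (fun i => (Finset.Icc 1 i).sigma (fun k => Finset.Icc 0 (N - k))),
          (1 + (x.1:ℝ)) * (a x.1 x.2.2 x.2.1 * d x.2.2 * d x.1)
      = ∑ i ∈ Finset.range (N+1), ∑ k ∈ Finset.Icc 1 i, ∑ j ∈ Finset.Icc 0 (N - k),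
      (1 + (i:ℝ)) * (a i j k * d j * d i) := by
    rw [Finset.sum_sigma]
    exact Finset.sum_congr rfl (fun i _ => by rw [Finset.sum_sigma])
  rw [← h1]
  refine Finset.sum_nbij' (fun x => (x.1, x.2.1, x.2.2))
    (fun y => ⟨y.1, y.2.1, y.2.2⟩) ?_ ?_ ?_ ?_ ?_
  · intro x hx
    simp only [Finset.mem_sigma, Finset.mem_range, Finset.mem_Icc, Nat.lt_succ_iff] at hx
    rw [mem_dS]; dsimp only; omega
  · intro y hy
    rw [mem_dS] at hy
    simp only [Finset.mem_sigma, Finset.mem_range, Finset.mem_Icc, Nat.lt_succ_iff]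
    omega
  · intro x hx
    rfl
  · intro y hy
    rfl
  · intro x hx
    dsimp only
    ring

/-- Conservation of the `(1+i)`-weighted total by the truncated isolated system. -/
lemma conserv (a : ℕ → ℕ → ℕ → ℝ) (N : ℕ) (d : ℕ → ℝ) :
    ∑ i ∈ Finset.range (N+1),
      (1 + (i:ℝ)) * (QN1 a N d i + QN2 a N d i + QN3 a N d i + QN4 a N d i) = 0 := by
  simp only [mul_add]
  rw [Finset.sum_add_distrib, Finset.sum_add_distrib, Finset.sum_add_distrib,
    reindexQ1, reindexQ2, reindexQ3, reindexQ4]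
  rw [← sub_eq_add_neg, ← sub_eq_add_neg, ← Finset.sum_sub_distrib,
    ← Finset.sum_add_distrib, ← Finset.sum_sub_distrib]
  exact Finset.sum_eq_zero fun x _ => by ring

/-- Total loss rate of zero-clusters. -/
noncomputable def R0 (a : ℕ → ℕ → ℕ → ℝ) (N : ℕ) (d : ℕ → ℝ) : ℝ :=
  ∑ k ∈ Finset.Icc 1 N, ∑ j ∈ Finset.Icc k N, a j 0 k * d j * d 0

section bounds
variable {a : ℕ → ℕ → ℕ → ℝ} {C Q : ℝ} {q : ℕ → ℕ → ℝ} {N i : ℕ} {d : ℕ → ℝ} {M : ℝ}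

lemma sum_weight_le (hd : ∀ j ≤ N, 0 ≤ d j)
    (hM : ∑ j ∈ Finset.range (N+1), (1+(j:ℝ)) * d j ≤ M)
    {s : Finset ℕ} (hs : s ⊆ Finset.range (N+1)) :
    ∑ j ∈ s, (1+(j:ℝ)) * d j ≤ M := by
  refine le_trans (Finset.sum_le_sum_of_subset_of_nonneg hs ?_) hM
  intro j hj _
  exact mul_nonneg (by positivity) (hd j (by simpa [Nat.lt_succ_iff] using hj))

lemma d_le_M (hd : ∀ j ≤ N, 0 ≤ d j)
    (hM : ∑ j ∈ Finset.range (N+1), (1+(j:ℝ)) * d j ≤ M) {m : ℕ} (hm : m ≤ N) :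
    d m ≤ M := by
  have h1 : d m ≤ (1+(m:ℝ)) * d m := by
    nlinarith [hd m hm, Nat.cast_nonneg (α := ℝ) m]
  refine le_trans h1 (le_trans (Finset.single_le_sum (f := fun j : ℕ => (1+(j:ℝ)) * d j) ?_ ?_) hM)
  · intro j hj
    exact mul_nonneg (by positivity) (hd j (by simpa [Nat.lt_succ_iff] using hj))
  · simpa [Nat.lt_succ_iff] using hm

lemma M_nonneg (hd : ∀ j ≤ N, 0 ≤ d j)
    (hM : ∑ j ∈ Finset.range (N+1), (1+(j:ℝ)) * d j ≤ M) : 0 ≤ M := by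
  refine le_trans (Finset.sum_nonneg ?_) hM
  intro j hj
  exact mul_nonneg (by positivity) (hd j (by simpa [Nat.lt_succ_iff] using hj))

lemma single_q_le (hq : ∀ i k, 0 ≤ q i k)
    (hGB4 : ∀ i : ℕ, 1 ≤ i →
      ∑ k ∈ Finset.Icc 1 i, (k : ℝ) * ((i : ℝ) - k + 1) * q i k ≤ Q * i)
    {p k : ℕ} (hk1 : 1 ≤ k) (hkp : k ≤ p) :
    (k:ℝ) * ((p:ℝ) - k + 1) * q p k ≤ Q * p := by
  refine le_trans (Finset.single_le_sum
    (f := fun k' : ℕ => (k':ℝ) * ((p:ℝ) - k' + 1) * q p k') ?_ ?_) (hGB4 p (by omega))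
  · intro k' hk'
    simp only [Finset.mem_Icc] at hk'
    have : (k':ℝ) ≤ (p:ℝ) := by exact_mod_cast hk'.2
    have h1 : (0:ℝ) ≤ (p:ℝ) - k' + 1 := by linarith
    exact mul_nonneg (mul_nonneg (Nat.cast_nonneg k') h1) (hq p k')
  · simp only [Finset.mem_Icc]; omega

lemma bound_Q1 (hC : 1 ≤ C) (hQ : 1 ≤ Q) (hq : ∀ i k, 0 ≤ q i k)
    (hGB4 : ∀ i : ℕ, 1 ≤ i →
      ∑ k ∈ Finset.Icc 1 i, (k : ℝ) * ((i : ℝ) - k + 1) * q i k ≤ Q * i)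
    (hGB5 : ∀ i j k : ℕ, 1 ≤ k → k ≤ i → 1 ≤ j →
      a i j k ≤ C * ((i : ℝ) - k + 1) * ((j : ℝ) + k) * q i k)
    (hiN : i ≤ N) (hd : ∀ j ≤ N, 0 ≤ d j)
    (hM : ∑ j ∈ Finset.range (N+1), (1+(j:ℝ)) * d j ≤ M) :
    QN1 a N d i ≤ (∑ k ∈ Finset.Icc 1 (N-i), a (i+k) 0 k * d (i+k) * d 0) + C*Q*M^2 := by
  have hC0 : (0:ℝ) ≤ C := by linarith
  have hQ0 : (0:ℝ) ≤ Q := by linarith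
  have hM0 : 0 ≤ M := M_nonneg hd hM
  have hsplit : ∀ m : ℕ, Finset.Icc 0 m = insert 0 (Finset.Icc 1 m) := by
    intro m; ext x; simp [Finset.mem_Icc]; omega
  have h0 : QN1 a N d i = (∑ k ∈ Finset.Icc 1 (N-i), a (i+k) 0 k * d (i+k) * d 0)
      + ∑ k ∈ Finset.Icc 1 (N-i), ∑ j ∈ Finset.Icc 1 (N-k), a (i+k) j k * d (i+k) * d j := by
    unfold QN1
    rw [← Finset.sum_add_distrib]
    refine Finset.sum_congr rfl fun k hk => ?_
    rw [hsplit (N-k), Finset.sum_insert (by simp)]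
  rw [h0]
  have key : ∀ k ∈ Finset.Icc 1 (N-i),
      ∑ j ∈ Finset.Icc 1 (N-k), a (i+k) j k * d (i+k) * d j
        ≤ (C*Q*M) * ((1+((i+k:ℕ):ℝ)) * d (i+k)) := by
    intro k hk
    simp only [Finset.mem_Icc] at hk
    have hik : i + k ≤ N := by omega
    have hdik : 0 ≤ d (i+k) := hd _ hik
    calc ∑ j ∈ Finset.Icc 1 (N-k), a (i+k) j k * d (i+k) * d j
        ≤ ∑ j ∈ Finset.Icc 1 (N-k), (C*Q*(1+((i+k:ℕ):ℝ)) * d (i+k)) * ((1+(j:ℝ)) * d j) := by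
          refine Finset.sum_le_sum fun j hj => ?_
          simp only [Finset.mem_Icc] at hj
          have hdj : 0 ≤ d j := hd _ (by omega)
          have hstep : a (i+k) j k ≤ C*Q*(1+((i+k:ℕ):ℝ))*(1+(j:ℝ)) := by
            have h5 := hGB5 (i+k) j k hk.1 (by omega) hj.1
            have hq1 := single_q_le (Q := Q) hq hGB4 hk.1 (show k ≤ i + k by omega)
            have hc1 : ((i+k:ℕ):ℝ) - (k:ℝ) + 1 = (i:ℝ)+1 := by push_cast; ring
            rw [hc1] at h5
            have hjk : ((j:ℝ) + k) ≤ (k:ℝ) * (1+(j:ℝ)) := by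
              have hk1 : (1:ℝ) ≤ (k:ℝ) := by exact_mod_cast hk.1
              have hj0 : (0:ℝ) ≤ (j:ℝ) := Nat.cast_nonneg j
              nlinarith
            have hq2 : 0 ≤ q (i+k) k := hq _ _
            have hpos : (0:ℝ) ≤ C * ((i:ℝ)+1) := by positivity
            have h6 : a (i+k) j k ≤ C * ((i:ℝ)+1) * ((k:ℝ)*(1+(j:ℝ))) * q (i+k) k :=
              le_trans h5 (mul_le_mul_of_nonneg_right (mul_le_mul_of_nonneg_left hjk hpos) hq2)
            have h7 : C * ((i:ℝ)+1) * ((k:ℝ)*(1+(j:ℝ))) * q (i+k) k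
                = (C * (1+(j:ℝ))) * ((k:ℝ) * (((i+k:ℕ):ℝ) - (k:ℝ) + 1) * q (i+k) k) := by
              rw [hc1]; ring
            refine le_trans h6 ?_
            rw [h7]
            have h8 : (C * (1+(j:ℝ))) * ((k:ℝ) * (((i+k:ℕ):ℝ) - (k:ℝ) + 1) * q (i+k) k)
                ≤ (C * (1+(j:ℝ))) * (Q * ((i+k:ℕ):ℝ)) := by
              refine mul_le_mul_of_nonneg_left hq1 (by positivity)
            refine le_trans h8 ?_
            nlinarith [mul_nonneg (mul_nonneg hC0 hQ0) (show (0:ℝ) ≤ 1 + (j:ℝ) by positivity)]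
          calc a (i+k) j k * d (i+k) * d j
              ≤ (C*Q*(1+((i+k:ℕ):ℝ))*(1+(j:ℝ))) * d (i+k) * d j := by
                refine mul_le_mul_of_nonneg_right (mul_le_mul_of_nonneg_right hstep hdik) hdj
            _ = (C*Q*(1+((i+k:ℕ):ℝ)) * d (i+k)) * ((1+(j:ℝ)) * d j) := by ring
      _ = (C*Q*(1+((i+k:ℕ):ℝ)) * d (i+k)) * ∑ j ∈ Finset.Icc 1 (N-k), (1+(j:ℝ)) * d j := by
          rw [Finset.mul_sum]
      _ ≤ (C*Q*(1+((i+k:ℕ):ℝ)) * d (i+k)) * M := by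
          refine mul_le_mul_of_nonneg_left (sum_weight_le hd hM ?_) (by positivity)
          intro j hj
          simp only [Finset.mem_Icc] at hj
          simp only [Finset.mem_range, Nat.lt_succ_iff]
          omega
      _ = (C*Q*M) * ((1+((i+k:ℕ):ℝ)) * d (i+k)) := by ring
  have hshift : ∑ k ∈ Finset.Icc 1 (N-i), (1+((i+k:ℕ):ℝ)) * d (i+k) ≤ M := by
    have he : ∑ k ∈ Finset.Icc 1 (N-i), (1+((i+k:ℕ):ℝ)) * d (i+k)
        = ∑ p ∈ Finset.Icc (i+1) N, (1+(p:ℝ)) * d p := by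
      refine Finset.sum_nbij' (fun k => i + k) (fun p => p - i) ?_ ?_ ?_ ?_ ?_
      · intro k hk; simp only [Finset.mem_Icc] at *; omega
      · intro p hp; simp only [Finset.mem_Icc] at *; omega
      · intro k hk; simp only [Finset.mem_Icc] at hk; omega
      · intro p hp; simp only [Finset.mem_Icc] at hp; omega
      · intro k hk; rfl
    rw [he]
    refine sum_weight_le hd hM ?_
    intro p hp
    simp only [Finset.mem_Icc] at hp
    simp only [Finset.mem_range, Nat.lt_succ_iff]
    omega
  have : ∑ k ∈ Finset.Icc 1 (N-i), ∑ j ∈ Finset.Icc 1 (N-k), a (i+k) j k * d (i+k) * d j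
      ≤ C*Q*M^2 := by
    calc ∑ k ∈ Finset.Icc 1 (N-i), ∑ j ∈ Finset.Icc 1 (N-k), a (i+k) j k * d (i+k) * d j
        ≤ ∑ k ∈ Finset.Icc 1 (N-i), (C*Q*M) * ((1+((i+k:ℕ):ℝ)) * d (i+k)) :=
          Finset.sum_le_sum key
      _ = (C*Q*M) * ∑ k ∈ Finset.Icc 1 (N-i), (1+((i+k:ℕ):ℝ)) * d (i+k) := by
          rw [Finset.mul_sum]
      _ ≤ (C*Q*M) * M := mul_le_mul_of_nonneg_left hshift (by positivity)
      _ = C*Q*M^2 := by ring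
  linarith

lemma bound_Q3 (hC : 1 ≤ C) (hQ : 1 ≤ Q) (hq : ∀ i k, 0 ≤ q i k)
    (hGB4 : ∀ i : ℕ, 1 ≤ i →
      ∑ k ∈ Finset.Icc 1 i, (k : ℝ) * ((i : ℝ) - k + 1) * q i k ≤ Q * i)
    (hGB5 : ∀ i j k : ℕ, 1 ≤ k → k ≤ i → 1 ≤ j →
      a i j k ≤ C * ((i : ℝ) - k + 1) * ((j : ℝ) + k) * q i k)
    (hi1 : 1 ≤ i) (hiN : i ≤ N) (hd : ∀ j ≤ N, 0 ≤ d j)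
    (hM : ∑ j ∈ Finset.range (N+1), (1+(j:ℝ)) * d j ≤ M) :
    QN3 a N d i ≤ (∑ j ∈ Finset.Icc i N, a j 0 i * d j * d 0) + C*Q*(i:ℝ)^2*M^2 := by
  have hC0 : (0:ℝ) ≤ C := by linarith
  have hQ0 : (0:ℝ) ≤ Q := by linarith
  have hM0 : 0 ≤ M := M_nonneg hd hM
  have hsplit : Finset.Icc 1 i = insert i (Finset.Icc 1 (i-1)) := by
    ext x; simp [Finset.mem_Icc]; omega
  have h0 : QN3 a N d i = (∑ j ∈ Finset.Icc i N, a j 0 i * d j * d 0)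
      + ∑ k ∈ Finset.Icc 1 (i-1), ∑ j ∈ Finset.Icc k N, a j (i-k) k * d j * d (i-k) := by
    unfold QN3
    rw [hsplit, Finset.sum_insert (by simp [Finset.mem_Icc]; omega), Nat.sub_self]
  rw [h0]
  have key : ∀ k ∈ Finset.Icc 1 (i-1),
      ∑ j ∈ Finset.Icc k N, a j (i-k) k * d j * d (i-k) ≤ C*Q*(i:ℝ)*M*M := by
    intro k hk
    simp only [Finset.mem_Icc] at hk
    have hm1 : 1 ≤ i - k := by omega
    have hmN : i - k ≤ N := by omega
    have hdm : d (i-k) ≤ M := d_le_M hd hM hmN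
    have hdm0 : 0 ≤ d (i-k) := hd _ hmN
    calc ∑ j ∈ Finset.Icc k N, a j (i-k) k * d j * d (i-k)
        ≤ ∑ j ∈ Finset.Icc k N, (C*Q*(i:ℝ)*M) * ((1+(j:ℝ)) * d j) := by
          refine Finset.sum_le_sum fun j hj => ?_
          simp only [Finset.mem_Icc] at hj
          have hdj : 0 ≤ d j := hd _ hj.2
          have h5 := hGB5 j (i-k) k hk.1 hj.1 hm1
          have hmk : ((i-k:ℕ):ℝ) + (k:ℝ) = (i:ℝ) := by
            have hki : k ≤ i := by omega
            push_cast [Nat.cast_sub hki]; ring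
          rw [hmk] at h5
          have hjk : (0:ℝ) ≤ (j:ℝ) - k + 1 := by
            have : (k:ℝ) ≤ (j:ℝ) := by exact_mod_cast hj.1
            linarith
          have hk1 : (1:ℝ) ≤ (k:ℝ) := by exact_mod_cast hk.1
          have hq2 : 0 ≤ q j k := hq _ _
          have h6 : C * ((j:ℝ) - k + 1) * (i:ℝ) * q j k
              ≤ (C * (i:ℝ)) * ((k:ℝ) * ((j:ℝ) - k + 1) * q j k) := by
            have hCi : (0:ℝ) ≤ C * (i:ℝ) := by positivity
            nlinarith [mul_nonneg (mul_nonneg hCi hjk) hq2]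
          have hq1 := single_q_le (Q := Q) hq hGB4 hk.1 hj.1
          have h7 : (C * (i:ℝ)) * ((k:ℝ) * ((j:ℝ) - k + 1) * q j k)
              ≤ (C * (i:ℝ)) * (Q * (j:ℝ)) :=
            mul_le_mul_of_nonneg_left hq1 (by positivity)
          have h8 : a j (i-k) k ≤ C*Q*(i:ℝ)*(1+(j:ℝ)) := by
            have := le_trans h5 (le_trans (le_of_eq (by ring)) (le_trans h6 h7))
            nlinarith [mul_nonneg (mul_nonneg hC0 hQ0) (Nat.cast_nonneg (α := ℝ) i)]
          calc a j (i-k) k * d j * d (i-k)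
              ≤ (C*Q*(i:ℝ)*(1+(j:ℝ))) * d j * M := by
                have h9 : a j (i-k) k * d j ≤ (C*Q*(i:ℝ)*(1+(j:ℝ))) * d j :=
                  mul_le_mul_of_nonneg_right h8 hdj
                have h10 : (0:ℝ) ≤ (C*Q*(i:ℝ)*(1+(j:ℝ))) * d j := by positivity
                exact mul_le_mul h9 hdm hdm0 h10
            _ = (C*Q*(i:ℝ)*M) * ((1+(j:ℝ)) * d j) := by ring
      _ = (C*Q*(i:ℝ)*M) * ∑ j ∈ Finset.Icc k N, (1+(j:ℝ)) * d j := by rw [Finset.mul_sum]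
      _ ≤ (C*Q*(i:ℝ)*M) * M := by
          refine mul_le_mul_of_nonneg_left (sum_weight_le hd hM ?_) (by positivity)
          intro j hj
          simp only [Finset.mem_Icc] at hj
          simp only [Finset.mem_range, Nat.lt_succ_iff]
          omega
      _ = C*Q*(i:ℝ)*M*M := rfl
  have hsum : ∑ k ∈ Finset.Icc 1 (i-1), ∑ j ∈ Finset.Icc k N, a j (i-k) k * d j * d (i-k)
      ≤ C*Q*(i:ℝ)^2*M^2 := by
    calc ∑ k ∈ Finset.Icc 1 (i-1), ∑ j ∈ Finset.Icc k N, a j (i-k) k * d j * d (i-k)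
        ≤ ∑ _k ∈ Finset.Icc 1 (i-1), C*Q*(i:ℝ)*M*M := Finset.sum_le_sum key
      _ = (((i-1:ℕ)):ℝ) * (C*Q*(i:ℝ)*M*M) := by
          rw [Finset.sum_const, Nat.card_Icc, nsmul_eq_mul]
          norm_num
      _ ≤ (i:ℝ) * (C*Q*(i:ℝ)*M*M) := by
          refine mul_le_mul_of_nonneg_right ?_ (by positivity)
          exact_mod_cast Nat.sub_le i 1
      _ = C*Q*(i:ℝ)^2*M^2 := by ring
  linarith

lemma bound_Q1_zero (hzero : ∀ p : ℕ, 1 ≤ p → a p 0 p = 0)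
    (hC : 1 ≤ C) (hQ : 1 ≤ Q) (hq : ∀ i k, 0 ≤ q i k)
    (hGB4 : ∀ i : ℕ, 1 ≤ i →
      ∑ k ∈ Finset.Icc 1 i, (k : ℝ) * ((i : ℝ) - k + 1) * q i k ≤ Q * i)
    (hGB5 : ∀ i j k : ℕ, 1 ≤ k → k ≤ i → 1 ≤ j →
      a i j k ≤ C * ((i : ℝ) - k + 1) * ((j : ℝ) + k) * q i k)
    (hd : ∀ j ≤ N, 0 ≤ d j)
    (hM : ∑ j ∈ Finset.range (N+1), (1+(j:ℝ)) * d j ≤ M) :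
    QN1 a N d 0 ≤ C*Q*M^2 := by
  have h := bound_Q1 hC hQ hq hGB4 hGB5 (Nat.zero_le N) hd hM
  have hz : ∑ k ∈ Finset.Icc 1 (N-0), a (0+k) 0 k * d (0+k) * d 0 = 0 := by
    refine Finset.sum_eq_zero fun k hk => ?_
    simp only [Finset.mem_Icc] at hk
    rw [Nat.zero_add, hzero k hk.1]
    ring
  rw [hz, zero_add] at h
  exact h

lemma sub1_le_R0 (ha : ∀ i j k, 0 ≤ a i j k) (hiN : i ≤ N) (hd : ∀ j ≤ N, 0 ≤ d j) :
    ∑ k ∈ Finset.Icc 1 (N-i), a (i+k) 0 k * d (i+k) * d 0 ≤ R0 a N d := by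
  unfold R0
  have h1 : ∀ k ∈ Finset.Icc 1 (N-i),
      a (i+k) 0 k * d (i+k) * d 0 ≤ ∑ j ∈ Finset.Icc k N, a j 0 k * d j * d 0 := by
    intro k hk
    simp only [Finset.mem_Icc] at hk
    refine Finset.single_le_sum (f := fun j : ℕ => a j 0 k * d j * d 0) ?_ ?_
    · intro j hj
      simp only [Finset.mem_Icc] at hj
      exact mul_nonneg (mul_nonneg (ha _ _ _) (hd _ hj.2)) (hd 0 (Nat.zero_le N))
    · simp only [Finset.mem_Icc]; omega
  calc ∑ k ∈ Finset.Icc 1 (N-i), a (i+k) 0 k * d (i+k) * d 0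
      ≤ ∑ k ∈ Finset.Icc 1 (N-i), ∑ j ∈ Finset.Icc k N, a j 0 k * d j * d 0 :=
        Finset.sum_le_sum h1
    _ ≤ ∑ k ∈ Finset.Icc 1 N, ∑ j ∈ Finset.Icc k N, a j 0 k * d j * d 0 := by
        refine Finset.sum_le_sum_of_subset_of_nonneg ?_ ?_
        · apply Finset.Icc_subset_Icc_right; omega
        · intro k _ _
          refine Finset.sum_nonneg fun j hj => ?_
          simp only [Finset.mem_Icc] at hj
          exact mul_nonneg (mul_nonneg (ha _ _ _) (hd _ hj.2)) (hd 0 (Nat.zero_le N))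

lemma sub3_le_R0 (ha : ∀ i j k, 0 ≤ a i j k) (hi1 : 1 ≤ i) (hiN : i ≤ N)
    (hd : ∀ j ≤ N, 0 ≤ d j) :
    ∑ j ∈ Finset.Icc i N, a j 0 i * d j * d 0 ≤ R0 a N d := by
  unfold R0
  refine Finset.single_le_sum
    (f := fun k : ℕ => ∑ j ∈ Finset.Icc k N, a j 0 k * d j * d 0) ?_ ?_
  · intro k _
    refine Finset.sum_nonneg fun j hj => ?_
    simp only [Finset.mem_Icc] at hj
    exact mul_nonneg (mul_nonneg (ha _ _ _) (hd _ hj.2)) (hd 0 (Nat.zero_le N))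
  · simp only [Finset.mem_Icc]; omega

lemma R0_nonneg (ha : ∀ i j k, 0 ≤ a i j k) (hd : ∀ j ≤ N, 0 ≤ d j) :
    0 ≤ R0 a N d := by
  unfold R0
  refine Finset.sum_nonneg fun k hk => Finset.sum_nonneg fun j hj => ?_
  simp only [Finset.mem_Icc] at hj
  exact mul_nonneg (mul_nonneg (ha _ _ _) (hd _ hj.2)) (hd 0 (Nat.zero_le N))

lemma QN1_nonneg (ha : ∀ i j k, 0 ≤ a i j k) (hiN : i ≤ N) (hd : ∀ j ≤ N, 0 ≤ d j) :
    0 ≤ QN1 a N d i := by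
  unfold QN1
  refine Finset.sum_nonneg fun k hk => Finset.sum_nonneg fun j hj => ?_
  simp only [Finset.mem_Icc] at hk hj
  exact mul_nonneg (mul_nonneg (ha _ _ _) (hd _ (by omega))) (hd _ (by omega))

lemma QN3_nonneg (ha : ∀ i j k, 0 ≤ a i j k) (hiN : i ≤ N) (hd : ∀ j ≤ N, 0 ≤ d j) :
    0 ≤ QN3 a N d i := by
  unfold QN3
  refine Finset.sum_nonneg fun k hk => Finset.sum_nonneg fun j hj => ?_
  simp only [Finset.mem_Icc] at hk hj
  exact mul_nonneg (mul_nonneg (ha _ _ _) (hd _ (by omega))) (hd _ (by omega))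

lemma QN2_nonpos (ha : ∀ i j k, 0 ≤ a i j k) (hiN : i ≤ N) (hd : ∀ j ≤ N, 0 ≤ d j) :
    QN2 a N d i ≤ 0 := by
  unfold QN2
  refine neg_nonpos.mpr (Finset.sum_nonneg fun k hk => Finset.sum_nonneg fun j hj => ?_)
  simp only [Finset.mem_Icc] at hk hj
  exact mul_nonneg (mul_nonneg (ha _ _ _) (hd _ (by omega))) (hd _ (by omega))

lemma QN4_nonpos (ha : ∀ i j k, 0 ≤ a i j k) (hiN : i ≤ N) (hd : ∀ j ≤ N, 0 ≤ d j) :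
    QN4 a N d i ≤ 0 := by
  unfold QN4
  refine neg_nonpos.mpr (Finset.sum_nonneg fun k hk => Finset.sum_nonneg fun j hj => ?_)
  simp only [Finset.mem_Icc] at hk hj
  exact mul_nonneg (mul_nonneg (ha _ _ _) (hd _ (by omega))) (hd _ (by omega))

lemma R0_eq_negQN2_zero : R0 a N d = -QN2 a N d 0 := by
  unfold R0 QN2
  rw [neg_neg, Nat.sub_zero]

lemma QN3_zero : QN3 a N d 0 = 0 := by unfold QN3; simp

lemma QN4_zero : QN4 a N d 0 = 0 := by unfold QN4; simp

lemma QN1_N : QN1 a N d N = 0 := by unfold QN1; simp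

lemma QN2_N : QN2 a N d N = 0 := by unfold QN2; simp

end bounds

section cont
variable {a : ℕ → ℕ → ℕ → ℝ} {N i : ℕ} {c : ℕ → ℝ → ℝ} {I : Set ℝ}

lemma contQN1 (hc : ∀ j ≤ N, ContinuousOn (c j) I) (hiN : i ≤ N) :
    ContinuousOn (fun t => QN1 a N (fun n => c n t) i) I := by
  unfold QN1
  refine continuousOn_finset_sum _ fun k hk => continuousOn_finset_sum _ fun j hj => ?_
  simp only [Finset.mem_Icc] at hk hj
  exact (continuousOn_const.mul (hc (i+k) (by omega))).mul (hc j (by omega))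

lemma contQN2 (hc : ∀ j ≤ N, ContinuousOn (c j) I) (hiN : i ≤ N) :
    ContinuousOn (fun t => QN2 a N (fun n => c n t) i) I := by
  unfold QN2
  refine ContinuousOn.neg ?_
  refine continuousOn_finset_sum _ fun k hk => continuousOn_finset_sum _ fun j hj => ?_
  simp only [Finset.mem_Icc] at hk hj
  exact (continuousOn_const.mul (hc j (by omega))).mul (hc i (by omega))

lemma contQN3 (hc : ∀ j ≤ N, ContinuousOn (c j) I) (hiN : i ≤ N) :
    ContinuousOn (fun t => QN3 a N (fun n => c n t) i) I := by
  unfold QN3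
  refine continuousOn_finset_sum _ fun k hk => continuousOn_finset_sum _ fun j hj => ?_
  simp only [Finset.mem_Icc] at hk hj
  exact (continuousOn_const.mul (hc j (by omega))).mul (hc (i-k) (by omega))

lemma contQN4 (hc : ∀ j ≤ N, ContinuousOn (c j) I) (hiN : i ≤ N) :
    ContinuousOn (fun t => QN4 a N (fun n => c n t) i) I := by
  unfold QN4
  refine ContinuousOn.neg ?_
  refine continuousOn_finset_sum _ fun k hk => continuousOn_finset_sum _ fun j hj => ?_
  simp only [Finset.mem_Icc] at hk hj
  exact (continuousOn_const.mul (hc j (by omega))).mul (hc i (by omega))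

end cont

/-- Lemma 4.6: uniform-in-`N` bound on the `L¹(0,T)` norm of `dc_i^N/dt`. -/
theorem truncated_derivative_L1_bound
    (a : ℕ → ℕ → ℕ → ℝ) (ha : ∀ i j k, 0 ≤ a i j k)
    (hzero : ∀ p : ℕ, 1 ≤ p → a p 0 p = 0)
    (C Q : ℝ) (q : ℕ → ℕ → ℝ) (hGB : GB a C Q q)
    (c0 : ℕ → ℝ) (hc0 : ∀ i, 0 ≤ c0 i)
    (hX : Summable (fun i : ℕ => (1 + (i : ℝ)) * c0 i))
    (T : ℝ) (hT : 0 < T) (i : ℕ) :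
    ∃ Γ : ℝ, 0 < Γ ∧
      ∀ N : ℕ, i ≤ N → 2 ≤ N →
        ∀ c : ℕ → ℝ → ℝ, IsTruncSolIso a N (Set.Icc 0 T) c →
          (∀ j, j ≤ N → c j 0 = c0 j) →
          (∀ j, j ≤ N → ∀ t ∈ Set.Icc (0 : ℝ) T, 0 ≤ c j t) →
          (∫ t in (0 : ℝ)..T, |deriv (c i) t|) ≤ Γ := by
  obtain ⟨hC, hQ, hq, hGB4, hGB5⟩ := hGB
  have hC0 : (0:ℝ) ≤ C := by linarith
  have hQ0 : (0:ℝ) ≤ Q := by linarith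
  set M : ℝ := ∑' j : ℕ, (1 + (j:ℝ)) * c0 j with hMdef
  have hnn : ∀ j : ℕ, 0 ≤ (1 + (j:ℝ)) * c0 j := fun j => mul_nonneg (by positivity) (hc0 j)
  have hM0 : 0 ≤ M := tsum_nonneg hnn
  have hc0M : ∀ j : ℕ, c0 j ≤ M := by
    intro j
    have h1 : c0 j ≤ (1+(j:ℝ)) * c0 j := by
      nlinarith [hc0 j, Nat.cast_nonneg (α := ℝ) j]
    exact le_trans h1 (Summable.le_tsum hX j (fun m _ => hnn m))
  set K : ℝ := C*Q*M^2 + C*Q*(i:ℝ)^2*M^2 with hKdef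
  set IR : ℝ := M + T*(C*Q*M^2) with hIRdef
  have hB0 : 0 ≤ C*Q*M^2 := mul_nonneg (mul_nonneg hC0 hQ0) (sq_nonneg M)
  have hB1 : 0 ≤ C*Q*(i:ℝ)^2*M^2 :=
    mul_nonneg (mul_nonneg (mul_nonneg hC0 hQ0) (sq_nonneg _)) (sq_nonneg M)
  have hKnn : 0 ≤ K := add_nonneg hB0 hB1
  have hIRnn : 0 ≤ IR := add_nonneg hM0 (mul_nonneg hT.le hB0)
  refine ⟨M + 2*(2*IR + T*K) + 1, by nlinarith [mul_nonneg hT.le hKnn], ?_⟩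
  intro N hiN hN2 c hsol hinit hpos
  have huIcc : Set.uIcc (0:ℝ) T = Set.Icc 0 T := Set.uIcc_of_le hT.le
  -- derivatives at every index up to N
  have hder : ∀ j ≤ N, ∀ t ∈ Set.Icc (0:ℝ) T, HasDerivAt (c j)
      (QN1 a N (fun n => c n t) j + QN2 a N (fun n => c n t) j +
        QN3 a N (fun n => c n t) j + QN4 a N (fun n => c n t) j) t := by
    intro j hj t ht
    obtain ⟨h0, hmid, hNd⟩ := hsol t ht
    rcases eq_or_ne j 0 with rfl | hj0
    · simpa [QN3_zero, QN4_zero] using h0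
    rcases eq_or_ne j N with rfl | hjN
    · simpa [QN1_N, QN2_N] using hNd
    · exact hmid j (by omega) (by omega)
  have hcont : ∀ j ≤ N, ContinuousOn (c j) (Set.Icc 0 T) :=
    fun j hj t ht => ((hder j hj t ht).continuousAt).continuousWithinAt
  have hd_t : ∀ t ∈ Set.Icc (0:ℝ) T, ∀ j ≤ N, 0 ≤ c j t := fun t ht j hj => hpos j hj t ht
  -- conservation gives the uniform moment bound
  have hcons : ∀ t ∈ Set.Icc (0:ℝ) T,
      ∑ j ∈ Finset.range (N+1), (1+(j:ℝ)) * c j t ≤ M := by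
    have hFc : ContinuousOn
        (fun t => ∑ j ∈ Finset.range (N+1), (1+(j:ℝ)) * c j t) (Set.Icc 0 T) :=
      continuousOn_finset_sum _ fun j hj =>
        continuousOn_const.mul (hcont j (by simpa [Nat.lt_succ_iff] using hj))
    have hFd : ∀ x ∈ Set.Ico (0:ℝ) T, HasDerivWithinAt
        (fun t => ∑ j ∈ Finset.range (N+1), (1+(j:ℝ)) * c j t) 0 (Set.Ici x) x := by
      intro x hx
      have hx' : x ∈ Set.Icc (0:ℝ) T := ⟨hx.1, hx.2.le⟩
      have h := HasDerivAt.sum (u := Finset.range (N+1))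
        (A := fun j t => (1+(j:ℝ)) * c j t)
        (A' := fun j => (1+(j:ℝ)) * (QN1 a N (fun n => c n x) j + QN2 a N (fun n => c n x) j +
          QN3 a N (fun n => c n x) j + QN4 a N (fun n => c n x) j))
        (fun j hj => HasDerivAt.const_mul (1+(j:ℝ))
          (hder j (by simpa [Nat.lt_succ_iff] using hj) x hx'))
      rw [conserv, Finset.sum_fn] at h
      exact h.hasDerivWithinAt
    intro t ht
    have heq := constant_of_has_deriv_right_zero hFc hFd t ht
    rw [heq]
    have h0 : ∑ j ∈ Finset.range (N+1), (1+(j:ℝ)) * c j 0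
        = ∑ j ∈ Finset.range (N+1), (1+(j:ℝ)) * c0 j :=
      Finset.sum_congr rfl fun j hj => by
        rw [hinit j (by simpa [Nat.lt_succ_iff] using hj)]
    rw [h0]
    exact Summable.sum_le_tsum _ (fun m _ => hnn m) hX
  -- continuity of the time-dependent operators
  have hcQ1 := contQN1 (a := a) hcont hiN
  have hcQ2 := contQN2 (a := a) hcont hiN
  have hcQ3 := contQN3 (a := a) hcont hiN
  have hcQ4 := contQN4 (a := a) hcont hiN
  have hcQ10 := contQN1 (a := a) hcont (Nat.zero_le N)
  have hcQ20 := contQN2 (a := a) hcont (Nat.zero_le N)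
  have hcR0 : ContinuousOn (fun t => R0 a N (fun n => c n t)) (Set.Icc 0 T) := by
    simp only [R0_eq_negQN2_zero]
    exact hcQ20.neg
  have hII : ∀ f : ℝ → ℝ, ContinuousOn f (Set.Icc 0 T) →
      IntervalIntegrable f MeasureTheory.volume 0 T :=
    fun f hf => ContinuousOn.intervalIntegrable (by rwa [huIcc])
  -- fundamental theorem of calculus at index i
  have hFTCi : (∫ t in (0:ℝ)..T,
      ((QN1 a N (fun n => c n t) i + QN3 a N (fun n => c n t) i)
        - (-(QN2 a N (fun n => c n t) i + QN4 a N (fun n => c n t) i))))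
      = c i T - c i 0 := by
    refine intervalIntegral.integral_eq_sub_of_hasDerivAt ?_ ?_
    · intro t ht
      rw [huIcc] at ht
      have h := hder i hiN t ht
      exact h.congr_deriv (by ring)
    · exact hII _ ((hcQ1.add hcQ3).sub ((hcQ2.add hcQ4).neg))
  -- fundamental theorem of calculus at index 0
  have hFTC0 : (∫ t in (0:ℝ)..T,
      (QN1 a N (fun n => c n t) 0 - R0 a N (fun n => c n t))) = c 0 T - c 0 0 := by
    refine intervalIntegral.integral_eq_sub_of_hasDerivAt ?_ ?_
    · intro t ht
      rw [huIcc] at ht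
      have h := hder 0 (Nat.zero_le N) t ht
      exact h.congr_deriv (by rw [R0_eq_negQN2_zero, QN3_zero, QN4_zero]; ring)
    · exact hII _ (hcQ10.sub hcR0)
  -- bound on the integral of R0
  have hQ10b : ∀ t ∈ Set.Icc (0:ℝ) T, QN1 a N (fun n => c n t) 0 ≤ C*Q*M^2 :=
    fun t ht => bound_Q1_zero hzero hC hQ hq hGB4 hGB5
      (fun j hj => hd_t t ht j hj) (hcons t ht)
  have hIQ10 : (∫ t in (0:ℝ)..T, QN1 a N (fun n => c n t) 0) ≤ T*(C*Q*M^2) := by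
    have h := intervalIntegral.integral_mono_on hT.le (hII _ hcQ10)
      (hII _ continuousOn_const) hQ10b
    rwa [intervalIntegral.integral_const, sub_zero, smul_eq_mul] at h
  have hIR0 : (∫ t in (0:ℝ)..T, R0 a N (fun n => c n t)) ≤ IR := by
    have h2 : (∫ t in (0:ℝ)..T, QN1 a N (fun n => c n t) 0)
        - (∫ t in (0:ℝ)..T, R0 a N (fun n => c n t)) = c 0 T - c 0 0 := by
      rw [← intervalIntegral.integral_sub (hII _ hcQ10) (hII _ hcR0)]
      exact hFTC0
    have hc00 : c 0 0 = c0 0 := hinit 0 (by omega)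
    have hc0T : 0 ≤ c 0 T := hpos 0 (by omega) T ⟨hT.le, le_refl T⟩
    have h3 := hc0M 0
    rw [hIRdef]
    linarith [hIQ10]
  -- pointwise bound on the gain part at i
  have hGb : ∀ t ∈ Set.Icc (0:ℝ) T,
      QN1 a N (fun n => c n t) i + QN3 a N (fun n => c n t) i
        ≤ 2 * R0 a N (fun n => c n t) + K := by
    intro t ht
    have hd' : ∀ j ≤ N, 0 ≤ c j t := fun j hj => hd_t t ht j hj
    have hM' := hcons t ht
    have h1 := bound_Q1 hC hQ hq hGB4 hGB5 hiN hd' hM'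
    have h1' := sub1_le_R0 (i := i) ha hiN hd'
    have h3 : QN3 a N (fun n => c n t) i
        ≤ R0 a N (fun n => c n t) + C*Q*(i:ℝ)^2*M^2 := by
      rcases Nat.eq_zero_or_pos i with hi0 | hi1
      · subst hi0
        rw [QN3_zero]
        have hR := R0_nonneg ha hd'
        simp only [Nat.cast_zero]
        nlinarith
      · exact le_trans (bound_Q3 hC hQ hq hGB4 hGB5 hi1 hiN hd' hM')
          (by linarith [sub3_le_R0 ha hi1 hiN hd'])
    rw [hKdef]
    linarith
  -- integral bound on the gain part
  have hIG : (∫ t in (0:ℝ)..T,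
      (QN1 a N (fun n => c n t) i + QN3 a N (fun n => c n t) i)) ≤ 2*IR + T*K := by
    have hmono := intervalIntegral.integral_mono_on hT.le
      (hII (fun t => QN1 a N (fun n => c n t) i + QN3 a N (fun n => c n t) i) (hcQ1.add hcQ3))
      (hII (fun t => 2 * R0 a N (fun n => c n t) + K)
        ((continuousOn_const.mul hcR0).add continuousOn_const)) hGb
    have hrhs : (∫ t in (0:ℝ)..T, (2 * R0 a N (fun n => c n t) + K))
        = 2 * (∫ t in (0:ℝ)..T, R0 a N (fun n => c n t)) + T*K := by
      rw [intervalIntegral.integral_add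
          (hII (fun t => 2 * R0 a N (fun n => c n t)) (continuousOn_const.mul hcR0))
        (hII _ continuousOn_const), intervalIntegral.integral_const_mul,
        intervalIntegral.integral_const, sub_zero, smul_eq_mul]
    rw [hrhs] at hmono
    linarith [hIR0]
  -- the loss part is controlled by the gain part
  have hIL : (∫ t in (0:ℝ)..T,
      -(QN2 a N (fun n => c n t) i + QN4 a N (fun n => c n t) i))
      ≤ (∫ t in (0:ℝ)..T,
        (QN1 a N (fun n => c n t) i + QN3 a N (fun n => c n t) i)) + M := by
    have h2 : (∫ t in (0:ℝ)..T,
        (QN1 a N (fun n => c n t) i + QN3 a N (fun n => c n t) i))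
        - (∫ t in (0:ℝ)..T,
          -(QN2 a N (fun n => c n t) i + QN4 a N (fun n => c n t) i))
        = c i T - c i 0 := by
      rw [← intervalIntegral.integral_sub
        (hII (fun t => QN1 a N (fun n => c n t) i + QN3 a N (fun n => c n t) i) (hcQ1.add hcQ3))
        (hII (fun t => -(QN2 a N (fun n => c n t) i + QN4 a N (fun n => c n t) i))
          ((hcQ2.add hcQ4).neg))]
      exact hFTCi
    have hciT : 0 ≤ c i T := hpos i hiN T ⟨hT.le, le_refl T⟩
    have hci0 : c i 0 = c0 i := hinit i hiN
    have h3 := hc0M i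
    linarith
  -- final assembly
  have hIabs : (∫ t in (0:ℝ)..T, |deriv (c i) t|)
      ≤ (∫ t in (0:ℝ)..T,
        ((QN1 a N (fun n => c n t) i + QN3 a N (fun n => c n t) i)
          + -(QN2 a N (fun n => c n t) i + QN4 a N (fun n => c n t) i))) := by
    have hEq : Set.EqOn (fun t => |deriv (c i) t|)
        (fun t => |(QN1 a N (fun n => c n t) i + QN3 a N (fun n => c n t) i)
          - (-(QN2 a N (fun n => c n t) i + QN4 a N (fun n => c n t) i))|)
        (Set.uIcc 0 T) := by
      rw [huIcc]
      intro t ht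
      simp only
      rw [(hder i hiN t ht).deriv]
      congr 1
      ring
    rw [intervalIntegral.integral_congr hEq]
    refine intervalIntegral.integral_mono_on hT.le
      (hII _ (((hcQ1.add hcQ3).sub ((hcQ2.add hcQ4).neg)).abs))
      (hII _ ((hcQ1.add hcQ3).add ((hcQ2.add hcQ4).neg))) ?_
    intro t ht
    have hd' : ∀ j ≤ N, 0 ≤ c j t := fun j hj => hd_t t ht j hj
    have hG0 : 0 ≤ QN1 a N (fun n => c n t) i + QN3 a N (fun n => c n t) i :=
      add_nonneg (QN1_nonneg ha hiN hd') (QN3_nonneg ha hiN hd')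
    have hL0 : 0 ≤ -(QN2 a N (fun n => c n t) i + QN4 a N (fun n => c n t) i) := by
      have := QN2_nonpos (i := i) ha hiN hd'
      have := QN4_nonpos (i := i) ha hiN hd'
      linarith
    calc |(QN1 a N (fun n => c n t) i + QN3 a N (fun n => c n t) i)
          - (-(QN2 a N (fun n => c n t) i + QN4 a N (fun n => c n t) i))|
        ≤ |QN1 a N (fun n => c n t) i + QN3 a N (fun n => c n t) i|
          + |-(QN2 a N (fun n => c n t) i + QN4 a N (fun n => c n t) i)| := abs_sub _ _
      _ = (QN1 a N (fun n => c n t) i + QN3 a N (fun n => c n t) i)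
          + -(QN2 a N (fun n => c n t) i + QN4 a N (fun n => c n t) i) := by
          rw [abs_of_nonneg hG0, abs_of_nonneg hL0]
  have hsplit : (∫ t in (0:ℝ)..T,
      ((QN1 a N (fun n => c n t) i + QN3 a N (fun n => c n t) i)
        + -(QN2 a N (fun n => c n t) i + QN4 a N (fun n => c n t) i)))
      = (∫ t in (0:ℝ)..T,
        (QN1 a N (fun n => c n t) i + QN3 a N (fun n => c n t) i))
      + (∫ t in (0:ℝ)..T,
        -(QN2 a N (fun n => c n t) i + QN4 a N (fun n => c n t) i)) :=
    intervalIntegral.integral_add (hII _ (hcQ1.add hcQ3)) (hII _ ((hcQ2.add hcQ4).neg))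
  rw [hsplit] at hIabs
  linarith
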